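/- For every atomic rule ρ ∈ {ρ⁺, ρ⁻}, every rule μ ∈ {π⁺, π⁻, 𝔣4, λ, J}, and all modal trees T, S: if T rewrites to S by one ρ-step followed by one μ-step, then T rewrites to S by one μ-step followed by finitely many (possibly zero) ρ-steps (steps by atomic rules). -/

import Mathlib

namespace TRC

/-- Strictly positive formulas of `L⁺`. -/
inductive SPF : Type where
  | top : SPF
  | var : ℕ → SPF
  | dia : ℕ → SPF → SPF
  | and : SPF → SPF → SPF

/-- The sequent system `K⁺`. -/
inductive KPlus : SPF → SPF → Prop where
  | id (φ) : KPlus φ φ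
  | topI (φ) : KPlus φ .top
  | cut {φ ψ χ} : KPlus φ ψ → KPlus ψ χ → KPlus φ χ
  | andE₁ (φ ψ) : KPlus (.and φ ψ) φ
  | andE₂ (φ ψ) : KPlus (.and φ ψ) ψ
  | andI {φ ψ χ} : KPlus φ ψ → KPlus φ χ → KPlus φ (.and ψ χ)
  | dist {φ ψ} (α) : KPlus φ ψ → KPlus (.dia α φ) (.dia α ψ)

/-- The Reflection Calculus `RC`. -/
inductive RC : SPF → SPF → Prop where
  | id (φ) : RC φ φ
  | topI (φ) : RC φ .top
  | cut {φ ψ χ} : RC φ ψ → RC ψ χ → RC φ χ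
  | andE₁ (φ ψ) : RC (.and φ ψ) φ
  | andE₂ (φ ψ) : RC (.and φ ψ) ψ
  | andI {φ ψ χ} : RC φ ψ → RC φ χ → RC φ (.and ψ χ)
  | dist {φ ψ} (α) : RC φ ψ → RC (.dia α φ) (.dia α ψ)
  | trans (α φ) : RC (.dia α (.dia α φ)) (.dia α φ)
  | mono {α β} (φ) : β < α → RC (.dia α φ) (.dia β φ)
  | jax {α β} (φ ψ) : β < α → RC (.and (.dia α φ) (.dia β ψ)) (.dia α (.and φ (.dia β ψ)))

/-- Modal depth. -/
def SPF.md : SPF → ℕ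
  | .top => 0
  | .var _ => 0
  | .dia _ φ => φ.md + 1
  | .and φ ψ => max φ.md ψ.md

/-- Modal trees. -/
inductive MTree : Type where
  | node : List ℕ → List (ℕ × MTree) → MTree

/-- Sum of modal trees. -/
def MTree.sum : MTree → MTree → MTree
  | .node Δ₁ Γ₁, .node Δ₂ Γ₂ => .node (Δ₁ ++ Δ₂) (Γ₁ ++ Γ₂)

mutual
/-- Height of a modal tree. -/
def MTree.height : MTree → ℕ
  | .node _ Γ => heightL Γ
def heightL : List (ℕ × MTree) → ℕ
  | [] => 0
  | (_, S) :: Γ => max (S.height + 1) (heightL Γ)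
end

mutual
/-- `T.IsPos k`: the (1-indexed) string `k` is a position of `T`. -/
def MTree.IsPos : MTree → List ℕ → Prop
  | _, [] => True
  | .node _ Γ, i :: k => isPosL Γ i k
def isPosL : List (ℕ × MTree) → ℕ → List ℕ → Prop
  | [], _, _ => False
  | _ :: _, 0, _ => False
  | (_, S) :: _, 1, k => S.IsPos k
  | _ :: Γ, n+2, k => isPosL Γ (n+1) k
end

mutual
/-- Subtree of `T` at position `k` (returning a default junk value off positions). -/
def MTree.subtree : MTree → List ℕ → MTree
  | T, [] => T
  | .node Δ Γ, i :: k => subtreeL (.node Δ Γ) Γ i k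
def subtreeL : MTree → List (ℕ × MTree) → ℕ → List ℕ → MTree
  | d, [], _, _ => d
  | d, _ :: _, 0, _ => d
  | _, (_, S) :: _, 1, k => S.subtree k
  | d, _ :: Γ, n+2, k => subtreeL d Γ (n+1) k
end

mutual
/-- `T.replace S k`: replace the subtree of `T` at position `k` by `S`. -/
def MTree.replace : MTree → MTree → List ℕ → MTree
  | _, S, [] => S
  | .node Δ Γ, S, i :: k => .node Δ (replaceL Γ S i k)
def replaceL : List (ℕ × MTree) → MTree → ℕ → List ℕ → List (ℕ × MTree)
  | [], _, _, _ => []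
  | Γ, _, 0, _ => Γ
  | (α, C) :: Γ, S, 1, k => (α, C.replace S k) :: Γ
  | x :: Γ, S, n+2, k => x :: replaceL Γ S (n+1) k
end

/-- Names of the eight rewriting rules of TRC. -/
inductive Rule : Type where
  | rhoP | rhoM | sigma | piP | piM | four | lam | jay
  deriving DecidableEq

/-- One rewriting step performed at the root. -/
inductive RootStep : Rule → MTree → MTree → Prop where
  | rhoP {Δ Γ i p} (hi : 1 ≤ i) (h : Δ[i-1]? = some p) :
      RootStep .rhoP (.node Δ Γ) (.node (p :: Δ) Γ)
  | rhoM {Δ Γ i} (hi : 1 ≤ i) (h : i - 1 < Δ.length) :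
      RootStep .rhoM (.node Δ Γ) (.node (Δ.eraseIdx (i-1)) Γ)
  | sigma {Δ Γ i j x y} (hi : 1 ≤ i) (hj : 1 ≤ j) (hij : i ≠ j)
      (hx : Γ[i-1]? = some x) (hy : Γ[j-1]? = some y) :
      RootStep .sigma (.node Δ Γ) (.node Δ ((Γ.set (j-1) x).set (i-1) y))
  | piP {Δ Γ i x} (hi : 1 ≤ i) (hx : Γ[i-1]? = some x) :
      RootStep .piP (.node Δ Γ) (.node Δ (x :: Γ))
  | piM {Δ Γ i} (hi : 1 ≤ i) (h : i - 1 < Γ.length) :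
      RootStep .piM (.node Δ Γ) (.node Δ (Γ.eraseIdx (i-1)))
  | four {Δ Γ i j β Δt Γt S} (hi : 1 ≤ i) (hj : 1 ≤ j)
      (hΓ : Γ[i-1]? = some (β, MTree.node Δt Γt)) (hΓt : Γt[j-1]? = some (β, S)) :
      RootStep .four (.node Δ Γ) (.node Δ (Γ.set (i-1) (β, S)))
  | lam {Δ Γ i α β S} (hi : 1 ≤ i) (hβ : β < α) (hΓ : Γ[i-1]? = some (α, S)) :
      RootStep .lam (.node Δ Γ) (.node Δ (Γ.set (i-1) (β, S)))
  | jay {Δ Γ i j α β Δt Γt S} (hi : 1 ≤ i) (hj : 1 ≤ j) (hij : i ≠ j) (hβ : β < α)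
      (hΓi : Γ[i-1]? = some (α, MTree.node Δt Γt)) (hΓj : Γ[j-1]? = some (β, S)) :
      RootStep .jay (.node Δ Γ)
        (.node Δ ((Γ.set (i-1) (α, MTree.node Δt (Γt ++ [(β, S)]))).eraseIdx (j-1)))

/-- One step of the rule `r`, applied at some position. -/
def StepR (r : Rule) (T T' : MTree) : Prop :=
  ∃ k S, T.IsPos k ∧ RootStep r (T.subtree k) S ∧ T' = T.replace S k

/-- One step of the rewriting relation `↪`. -/
def Step (T T' : MTree) : Prop := ∃ r, StepR r T T'

/-- The rewriting relation `↪*`. -/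
def Steps : MTree → MTree → Prop := Relation.ReflTransGen Step

/-- TRC-equivalence `↔*`. -/
def TEquiv (T T' : MTree) : Prop := Steps T T' ∧ Steps T' T

/-- `T ↪^Ω S` : rewriting applying the rules of `Ω` in order, one step each. -/
inductive StepsOf : List Rule → MTree → MTree → Prop where
  | nil (T) : StepsOf [] T T
  | cons {r Ω T U S} : StepR r T U → StepsOf Ω U S → StepsOf (r :: Ω) T S

def AtomicStep (T S : MTree) : Prop := StepR .rhoP T S ∨ StepR .rhoM T S
def DecreasingStep (T S : MTree) : Prop := StepR .piM T S ∨ StepR .four T S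
def ModalStep (T S : MTree) : Prop := StepR .lam T S ∨ StepR .jay T S

/-- Finite conjunctions (empty conjunction is `⊤`). -/
def bigAnd : List SPF → SPF
  | [] => .top
  | φ :: l => .and φ (bigAnd l)

mutual
/-- The embedding `ℱ` of modal trees into formulas. -/
def MTree.toFormula : MTree → SPF
  | .node Δ Γ => .and (bigAnd (Δ.map SPF.var)) (diamL Γ)
def diamL : List (ℕ × MTree) → SPF
  | [] => .top
  | (α, S) :: Γ => .and (.dia α S.toFormula) (diamL Γ)
end

/-- The embedding `𝒯` of formulas into modal trees. -/
def SPF.toTree : SPF → MTree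
  | .top => .node [] []
  | .var p => .node [p] []
  | .dia α φ => .node [] [(α, φ.toTree)]
  | .and φ ψ => φ.toTree.sum ψ.toTree

/-- Nonempty conjunction `φ₁ ∧ (φ₂ ∧ (… ∧ φₙ))`. -/
def conjNE : SPF → List SPF → SPF
  | φ, [] => φ
  | φ, ψ :: l => .and φ (conjNE ψ l)

end TRC

namespace TRC

mutual
/-- `Sub T U`: same tree shape, and at each node the atoms of `U` are among those of `T`. -/
inductive Sub : MTree → MTree → Prop where
  | node {Δ Δ' : List ℕ} {Γ Γ' : List (ℕ × MTree)} :
      (∀ p ∈ Δ', p ∈ Δ) → SubL Γ Γ' → Sub (.node Δ Γ) (.node Δ' Γ')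
inductive SubL : List (ℕ × MTree) → List (ℕ × MTree) → Prop where
  | nil : SubL [] []
  | cons {α : ℕ} {S S' : MTree} {Γ Γ' : List (ℕ × MTree)} :
      Sub S S' → SubL Γ Γ' → SubL ((α, S) :: Γ) ((α, S') :: Γ')
end

mutual
theorem sub_refl : ∀ T, Sub T T
  | .node _ Γ => .node (fun _ h => h) (subL_refl Γ)
theorem subL_refl : ∀ Γ, SubL Γ Γ
  | [] => .nil
  | (_, S) :: Γ => .cons (sub_refl S) (subL_refl Γ)
end

theorem SubL.length_eq : ∀ {Γ Γ'}, SubL Γ Γ' → Γ.length = Γ'.length := by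
  intro Γ
  induction Γ with
  | nil => intro Γ' h; cases h; rfl
  | cons x Γ ih => intro Γ' h; cases h with | cons hS hΓ => simp [ih hΓ]

theorem SubL.getElem?_eq : ∀ {Γ Γ'}, SubL Γ Γ' → ∀ {n : ℕ} {α : ℕ} {S' : MTree},
    Γ'[n]? = some (α, S') → ∃ S, Γ[n]? = some (α, S) ∧ Sub S S' := by
  intro Γ
  induction Γ with
  | nil => intro Γ' h; cases h; intro n α S' h; simp at h
  | cons x Γ ih =>
    intro Γ' h
    cases h with
    | cons hS hΓ =>
      intro n α S' hn
      cases n with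
      | zero =>
        simp at hn
        obtain ⟨rfl, rfl⟩ := hn
        exact ⟨_, by simp, hS⟩
      | succ n =>
        simp only [List.getElem?_cons_succ] at hn ⊢
        exact ih hΓ hn

theorem SubL.set : ∀ {Γ Γ'}, SubL Γ Γ' → ∀ (n : ℕ) {α : ℕ} {S S' : MTree},
    Sub S S' → SubL (Γ.set n (α, S)) (Γ'.set n (α, S')) := by
  intro Γ
  induction Γ with
  | nil => intro Γ' h; cases h; intro n α S S' _; exact .nil
  | cons x Γ ih =>
    intro Γ' h
    cases h with
    | cons hS hΓ =>
      intro n α S S' hSS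
      cases n with
      | zero => exact .cons hSS hΓ
      | succ n => exact .cons hS (ih hΓ n hSS)

theorem SubL.eraseIdx : ∀ {Γ Γ'}, SubL Γ Γ' → ∀ (n : ℕ),
    SubL (Γ.eraseIdx n) (Γ'.eraseIdx n) := by
  intro Γ
  induction Γ with
  | nil => intro Γ' h; cases h; intro n; exact .nil
  | cons x Γ ih =>
    intro Γ' h
    cases h with
    | cons hS hΓ =>
      intro n
      cases n with
      | zero => exact hΓ
      | succ n => exact .cons hS (ih hΓ n)

theorem SubL.append : ∀ {Γ₁ Γ₁' Γ₂ Γ₂'}, SubL Γ₁ Γ₁' → SubL Γ₂ Γ₂' →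
    SubL (Γ₁ ++ Γ₂) (Γ₁' ++ Γ₂') := by
  intro Γ₁
  induction Γ₁ with
  | nil => intro Γ₁' Γ₂ Γ₂' h h2; cases h; exact h2
  | cons x Γ ih =>
    intro Γ₁' Γ₂ Γ₂' h h2
    cases h with
    | cons hS hΓ => exact .cons hS (ih hΓ h2)

end TRC
namespace TRC

@[simp] theorem isPos_nil (T : MTree) : T.IsPos [] := by cases T <;> simp [MTree.IsPos]
@[simp] theorem subtree_nil (T : MTree) : T.subtree [] = T := by cases T <;> simp [MTree.subtree]
@[simp] theorem replace_nil (T S : MTree) : T.replace S [] = S := by cases T <;> simp [MTree.replace]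

@[simp] theorem isPos_cons (Δ : List ℕ) (Γ) (i : ℕ) (k) :
    (MTree.node Δ Γ).IsPos (i :: k) ↔ isPosL Γ i k := by simp [MTree.IsPos]
@[simp] theorem isPosL_nil (i : ℕ) (k) : ¬ isPosL [] i k := by simp [isPosL]
@[simp] theorem isPosL_zero (x) (Γ : List (ℕ × MTree)) (k) : ¬ isPosL (x :: Γ) 0 k := by
  simp [isPosL]
@[simp] theorem isPosL_one (α : ℕ) (S : MTree) (Γ) (k) :
    isPosL ((α, S) :: Γ) 1 k ↔ S.IsPos k := by simp [isPosL]
@[simp] theorem isPosL_succ (x) (Γ : List (ℕ × MTree)) (n : ℕ) (k) :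
    isPosL (x :: Γ) (n + 2) k ↔ isPosL Γ (n + 1) k := by simp [isPosL]

@[simp] theorem subtree_cons (Δ : List ℕ) (Γ) (i : ℕ) (k) :
    (MTree.node Δ Γ).subtree (i :: k) = subtreeL (.node Δ Γ) Γ i k := by simp [MTree.subtree]
@[simp] theorem subtreeL_one (d : MTree) (α : ℕ) (S : MTree) (Γ) (k) :
    subtreeL d ((α, S) :: Γ) 1 k = S.subtree k := by simp [subtreeL]
@[simp] theorem subtreeL_succ (d : MTree) (x) (Γ : List (ℕ × MTree)) (n : ℕ) (k) :
    subtreeL d (x :: Γ) (n + 2) k = subtreeL d Γ (n + 1) k := by simp [subtreeL]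

@[simp] theorem replace_cons (Δ : List ℕ) (Γ) (A : MTree) (i : ℕ) (k) :
    (MTree.node Δ Γ).replace A (i :: k) = .node Δ (replaceL Γ A i k) := by simp [MTree.replace]
@[simp] theorem replaceL_nilL (A : MTree) (i : ℕ) (k) : replaceL [] A i k = [] := by
  simp [replaceL]
@[simp] theorem replaceL_zero (Γ : List (ℕ × MTree)) (A : MTree) (k) :
    replaceL Γ A 0 k = Γ := by cases Γ <;> simp [replaceL]
@[simp] theorem replaceL_one (α : ℕ) (C : MTree) (Γ) (A : MTree) (k) :
    replaceL ((α, C) :: Γ) A 1 k = (α, C.replace A k) :: Γ := by simp [replaceL]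
@[simp] theorem replaceL_succ (x) (Γ : List (ℕ × MTree)) (A : MTree) (n : ℕ) (k) :
    replaceL (x :: Γ) A (n + 2) k = x :: replaceL Γ A (n + 1) k := by simp [replaceL]

end TRC
namespace TRC

theorem subtreeL_irrel : ∀ {Γ : List (ℕ × MTree)} {i : ℕ} {k} (d d' : MTree),
    isPosL Γ i k → subtreeL d Γ i k = subtreeL d' Γ i k := by
  intro Γ
  induction Γ with
  | nil => intro i k d d' h; exact absurd h (isPosL_nil i k)
  | cons x Γ ih =>
    intro i k d d' h
    match i with
    | 0 => exact absurd h (isPosL_zero x Γ k)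
    | 1 => obtain ⟨α, S⟩ := x; simp
    | n + 2 => simp only [subtreeL_succ]; exact ih d d' ((isPosL_succ x Γ n k).1 h)

theorem Sub.isPos : ∀ (k) {T U}, Sub T U → MTree.IsPos U k → MTree.IsPos T k := by
  intro k
  induction k with
  | nil => intro T U _ _; exact isPos_nil T
  | cons i k ih =>
    intro T U h hp
    cases h with
    | node hΔ hΓ =>
      rw [isPos_cons] at hp ⊢
      clear hΔ
      rename_i Γ Γ'
      induction Γ generalizing Γ' i with
      | nil => cases hΓ; exact absurd hp (isPosL_nil i k)
      | cons x Γ ihL =>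
        cases hΓ with
        | cons hS hΓ =>
          match i with
          | 0 => exact absurd hp (isPosL_zero _ _ k)
          | 1 =>
            rw [isPosL_one] at hp ⊢
            exact ih hS hp
          | n + 2 =>
            rw [isPosL_succ] at hp ⊢
            exact ihL _ hΓ hp

theorem sub_subtree : ∀ (k) {T U}, Sub T U → Sub (T.subtree k) (U.subtree k) := by
  intro k
  induction k with
  | nil => intro T U h; simpa using h
  | cons i k ih =>
    intro T U h
    cases h with
    | node hΔ hΓ =>
      rw [subtree_cons, subtree_cons]
      rename_i Δ Δ' Γ Γ'
      have hdd : Sub (MTree.node Δ Γ) (MTree.node Δ' Γ') := Sub.node hΔ hΓ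
      revert hdd
      generalize (MTree.node Δ Γ : MTree) = d
      generalize (MTree.node Δ' Γ' : MTree) = d'
      intro hdd
      clear hΔ
      induction Γ generalizing Γ' i with
      | nil => cases hΓ; simpa [subtreeL] using hdd
      | cons x Γ ihL =>
        cases hΓ with
        | cons hS hΓ =>
          match i with
          | 0 => simpa [subtreeL] using hdd
          | 1 => rw [subtreeL_one, subtreeL_one]; exact ih hS
          | n + 2 => rw [subtreeL_succ, subtreeL_succ]; exact ihL _ hΓ

theorem sub_replace : ∀ (k) {T U A B}, Sub T U → Sub A B →
    Sub (T.replace A k) (U.replace B k) := by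
  intro k
  induction k with
  | nil => intro T U A B _ hAB; simpa using hAB
  | cons i k ih =>
    intro T U A B h hAB
    cases h with
    | node hΔ hΓ =>
      rw [replace_cons, replace_cons]
      refine Sub.node hΔ ?_
      rename_i Γ Γ'
      clear hΔ
      induction Γ generalizing Γ' i with
      | nil => cases hΓ; simpa using SubL.nil
      | cons x Γ ihL =>
        cases hΓ with
        | cons hS hΓ =>
          match i with
          | 0 => simp; exact .cons hS hΓ
          | 1 => rw [replaceL_one, replaceL_one]; exact .cons (ih hS hAB) hΓ
          | n + 2 => rw [replaceL_succ, replaceL_succ]; exact .cons hS (ihL _ hΓ)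

theorem replace_subtree_eq : ∀ (k) (T : MTree), T.IsPos k → T.replace (T.subtree k) k = T := by
  intro k
  induction k with
  | nil => intro T _; simp
  | cons i k ih =>
    intro T hp
    cases T with
    | node Δ Γ =>
      rw [isPos_cons] at hp
      rw [subtree_cons, replace_cons]
      congr 1
      generalize (MTree.node Δ Γ : MTree) = d
      induction Γ generalizing i with
      | nil => exact absurd hp (isPosL_nil i k)
      | cons x Γ ihL =>
        match i with
        | 0 => exact absurd hp (isPosL_zero x Γ k)
        | 1 =>
          obtain ⟨α, C⟩ := x
          rw [isPosL_one] at hp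
          rw [subtreeL_one, replaceL_one, ih C hp]
        | n + 2 =>
          rw [isPosL_succ] at hp
          rw [subtreeL_succ, replaceL_succ, ihL (n+1) hp]

end TRC
namespace TRC

@[simp] theorem isPosL_zero' (Γ : List (ℕ × MTree)) (k) : ¬ isPosL Γ 0 k := by
  cases Γ <;> simp [isPosL]

theorem stepR_push {Δ : List ℕ} {Γ} {p : ℕ} (hp : p ∈ Δ) :
    StepR .rhoP (.node Δ Γ) (.node (p :: Δ) Γ) := by
  obtain ⟨n, hn⟩ := List.mem_iff_getElem?.1 hp
  refine ⟨[], .node (p :: Δ) Γ, isPos_nil _, ?_, by simp⟩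
  rw [subtree_nil]
  exact RootStep.rhoP (i := n + 1) (by omega) (by simpa using hn)

theorem stepR_erase {Δ : List ℕ} {Γ} (E : List ℕ) (a : ℕ) :
    StepR .rhoM (.node (E ++ a :: Δ) Γ) (.node (E ++ Δ) Γ) := by
  refine ⟨[], .node ((E ++ a :: Δ).eraseIdx E.length) Γ, isPos_nil _, ?_, ?_⟩
  · rw [subtree_nil]
    exact RootStep.rhoM (i := E.length + 1) (by omega) (by simp)
  · rw [replace_nil, List.eraseIdx_append_of_length_le (le_refl _)]
    simp

theorem atoms_root {Δ Δ' : List ℕ} {Γ} (h : ∀ p ∈ Δ', p ∈ Δ) :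
    Relation.ReflTransGen AtomicStep (.node Δ Γ) (.node Δ' Γ) := by
  have push : ∀ (L : List ℕ), (∀ p ∈ L, p ∈ Δ) → ∀ E : List ℕ,
      Relation.ReflTransGen AtomicStep (.node (E ++ Δ) Γ) (.node (L ++ (E ++ Δ)) Γ) := by
    intro L hL
    induction L with
    | nil => intro E; exact .refl
    | cons p L ih =>
      intro E
      refine (ih (fun q hq => hL q (List.mem_cons_of_mem _ hq)) E).tail ?_
      exact Or.inl (stepR_push (by simp [hL p (List.mem_cons_self)]))
  have drop : ∀ (M : List ℕ),
      Relation.ReflTransGen AtomicStep (.node (Δ' ++ M) Γ) (.node Δ' Γ) := by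
    intro M
    induction M with
    | nil => simpa using Relation.ReflTransGen.refl
    | cons a M ih => exact Relation.ReflTransGen.head (Or.inr (stepR_erase Δ' a)) ih
  have h1 := push Δ' h []
  exact h1.trans (drop Δ)

theorem rootStep_atomic_gamma {r : Rule} {Δ : List ℕ} {Γ : List (ℕ × MTree)} {A : MTree}
    (hr : r = Rule.rhoP ∨ r = Rule.rhoM) (h : RootStep r (.node Δ Γ) A) :
    ∃ Δ' : List ℕ, A = .node Δ' Γ ∧ (∀ p ∈ Δ', p ∈ Δ) ∧
      ∀ Γ₀ : List (ℕ × MTree), RootStep r (.node Δ Γ₀) (.node Δ' Γ₀) := by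
  cases h with
  | rhoP hi hp =>
    refine ⟨_, rfl, ?_, fun Γ₀ => RootStep.rhoP hi hp⟩
    intro q hq
    rcases List.mem_cons.1 hq with rfl | hq
    · exact List.mem_of_getElem? hp
    · exact hq
  | rhoM hi hlt =>
    exact ⟨_, rfl, fun q hq => List.eraseIdx_subset hq, fun Γ₀ => RootStep.rhoM hi hlt⟩
  | sigma hi hj hij hx hy => simp at hr
  | piP hi hx => simp at hr
  | piM hi hlen => simp at hr
  | four hi hj hΓ hΓt => simp at hr
  | lam hi hβ hΓ => simp at hr
  | jay hi hj hij hβ hΓi hΓj => simp at hr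

theorem stepR_lift1 {r : Rule} {α : ℕ} {Δ : List ℕ} {Γ} {S S' : MTree} (h : StepR r S S') :
    StepR r (.node Δ ((α, S) :: Γ)) (.node Δ ((α, S') :: Γ)) := by
  obtain ⟨k, A, pos, root, rfl⟩ := h
  refine ⟨1 :: k, A, ?_, ?_, ?_⟩
  · rw [isPos_cons, isPosL_one]; exact pos
  · rw [subtree_cons, subtreeL_one]; exact root
  · rw [replace_cons, replaceL_one]

theorem atomic_lift1 {α : ℕ} {Δ : List ℕ} {Γ} {S S' : MTree} (h : AtomicStep S S') :
    AtomicStep (.node Δ ((α, S) :: Γ)) (.node Δ ((α, S') :: Γ)) := by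
  rcases h with h | h
  · exact Or.inl (stepR_lift1 h)
  · exact Or.inr (stepR_lift1 h)

theorem stepR_liftTail {r : Rule} (hr : r = Rule.rhoP ∨ r = Rule.rhoM)
    {x : ℕ × MTree} {Δ₁ Γ₁ Δ₂ Γ₂} (h : StepR r (.node Δ₁ Γ₁) (.node Δ₂ Γ₂)) :
    StepR r (.node Δ₁ (x :: Γ₁)) (.node Δ₂ (x :: Γ₂)) := by
  obtain ⟨k, A, pos, root, heq⟩ := h
  cases k with
  | nil =>
    rw [subtree_nil] at root
    rw [replace_nil] at heq
    subst heq
    obtain ⟨Δ', hA, _, hstep⟩ := rootStep_atomic_gamma hr root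
    injection hA with h1 h2
    rw [h1, h2]
    exact ⟨[], .node Δ' (x :: Γ₁), isPos_nil _, by rw [subtree_nil]; exact hstep _, by simp⟩
  | cons i k =>
    rw [isPos_cons] at pos
    match i with
    | 0 => exact absurd pos (isPosL_zero' _ k)
    | n + 1 =>
      rw [subtree_cons] at root
      rw [replace_cons] at heq
      injection heq with h1 h2
      rw [h1, h2]
      refine ⟨(n + 2) :: k, A, ?_, ?_, ?_⟩
      · rw [isPos_cons, isPosL_succ]; exact pos
      · rw [subtree_cons, subtreeL_succ, subtreeL_irrel _ (.node Δ₁ Γ₁) pos]; exact root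
      · rw [replace_cons, replaceL_succ]

/-- Prepend a child to the root children list. -/
def consG (x : ℕ × MTree) : MTree → MTree
  | .node Δ Γ => .node Δ (x :: Γ)

theorem atomic_liftTail {x : ℕ × MTree} {T U : MTree} (h : AtomicStep T U) :
    AtomicStep (consG x T) (consG x U) := by
  cases T with | node Δ₁ Γ₁ =>
  cases U with | node Δ₂ Γ₂ =>
  rcases h with h | h
  · exact Or.inl (stepR_liftTail (Or.inl rfl) h)
  · exact Or.inr (stepR_liftTail (Or.inr rfl) h)

mutual
theorem sub_steps : ∀ {T U}, Sub T U → Relation.ReflTransGen AtomicStep T U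
  | _, _, .node hΔ hΓ => (atoms_root hΔ).trans (subL_steps hΓ _)
theorem subL_steps : ∀ {Γ Γ'}, SubL Γ Γ' → ∀ Δ : List ℕ,
    Relation.ReflTransGen AtomicStep (.node Δ Γ) (.node Δ Γ')
  | _, _, .nil, _ => .refl
  | _, _, .cons (α := α) (S' := S') hS hΓ, Δ =>
    (Relation.ReflTransGen.lift (fun X => MTree.node Δ ((α, X) :: _))
        (fun _ _ h => atomic_lift1 h) _ _ (sub_steps hS)).trans
      (Relation.ReflTransGen.lift (consG (α, S')) (fun _ _ h => atomic_liftTail h)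
        _ _ (subL_steps hΓ Δ))
end

end TRC
namespace TRC

theorem atomic_sub {T U : MTree} (h : AtomicStep T U) : Sub T U := by
  have core : ∀ (r : Rule), (r = Rule.rhoP ∨ r = Rule.rhoM) → StepR r T U → Sub T U := by
    intro r hr h
    obtain ⟨k, A, pos, root, rfl⟩ := h
    obtain ⟨Δ, Γ, hT⟩ : ∃ Δ Γ, T.subtree k = .node Δ Γ := by
      cases hTk : T.subtree k; exact ⟨_, _, rfl⟩
    rw [hT] at root
    obtain ⟨Δ', hA, hmem, _⟩ := rootStep_atomic_gamma hr root
    have hlocal : Sub (T.subtree k) A := by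
      rw [hT, hA]; exact Sub.node hmem (subL_refl Γ)
    have h1 := sub_replace k (sub_refl T) hlocal
    rwa [replace_subtree_eq k T pos] at h1
  rcases h with h | h
  · exact core _ (Or.inl rfl) h
  · exact core _ (Or.inr rfl) h

theorem sub_stepR_comm {μ : Rule}
    (hμ : μ = Rule.piP ∨ μ = Rule.piM ∨ μ = Rule.four ∨ μ = Rule.lam ∨ μ = Rule.jay)
    {T U S : MTree} (hTU : Sub T U) (h : StepR μ U S) :
    ∃ U', StepR μ T U' ∧ Sub U' S := by
  obtain ⟨k, A, pos, root, rfl⟩ := h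
  have pos' : T.IsPos k := Sub.isPos k hTU pos
  have hsub := sub_subtree k hTU
  obtain ⟨ΔU, ΓU, hU⟩ : ∃ ΔU ΓU, U.subtree k = .node ΔU ΓU := by
    cases hUk : U.subtree k; exact ⟨_, _, rfl⟩
  obtain ⟨ΔT, ΓT, hT⟩ : ∃ ΔT ΓT, T.subtree k = .node ΔT ΓT := by
    cases hTk : T.subtree k; exact ⟨_, _, rfl⟩
  rw [hU] at root
  rw [hT, hU] at hsub
  cases hsub with
  | node hΔ hΓL =>
  rcases hμ with rfl | rfl | rfl | rfl | rfl <;> cases root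
  case piP i x hi hx =>
    obtain ⟨β, S₀⟩ := x
    obtain ⟨S₀', hx', hS₀⟩ := SubL.getElem?_eq hΓL hx
    refine ⟨T.replace (.node ΔT ((β, S₀') :: ΓT)) k,
      ⟨k, _, pos', by rw [hT]; exact RootStep.piP hi hx', rfl⟩,
      sub_replace k hTU (Sub.node hΔ (SubL.cons hS₀ hΓL))⟩
  case piM i hi hlt =>
    refine ⟨T.replace (.node ΔT (ΓT.eraseIdx (i - 1))) k,
      ⟨k, _, pos', by rw [hT]; exact RootStep.piM hi (by rw [SubL.length_eq hΓL]; exact hlt), rfl⟩,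
      sub_replace k hTU (Sub.node hΔ (SubL.eraseIdx hΓL _))⟩
  case four i j β Δt Γt S₀ hi hj hΓt hΓ =>
    obtain ⟨X, hX, hXsub⟩ := SubL.getElem?_eq hΓL hΓ
    obtain ⟨Δt', Γt'⟩ := X
    cases hXsub with
    | node hΔt hΓt' =>
    obtain ⟨S₀', hS₀', hsubS⟩ := SubL.getElem?_eq hΓt' hΓt
    refine ⟨T.replace (.node ΔT (ΓT.set (i - 1) (β, S₀'))) k,
      ⟨k, _, pos', by rw [hT]; exact RootStep.four hi hj hX hS₀', rfl⟩,
      sub_replace k hTU (Sub.node hΔ (SubL.set hΓL _ hsubS))⟩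
  case lam i α β S₀ hi hβ hΓ =>
    obtain ⟨S₀', hΓ', hsubS⟩ := SubL.getElem?_eq hΓL hΓ
    refine ⟨T.replace (.node ΔT (ΓT.set (i - 1) (β, S₀'))) k,
      ⟨k, _, pos', by rw [hT]; exact RootStep.lam hi hβ hΓ', rfl⟩,
      sub_replace k hTU (Sub.node hΔ (SubL.set hΓL _ hsubS))⟩
  case jay i j α β Δt Γt S₀ hi hj hij hβ hΓi hΓj =>
    obtain ⟨X, hXi, hXsub⟩ := SubL.getElem?_eq hΓL hΓi
    obtain ⟨Δt', Γt'⟩ := X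
    cases hXsub with
    | node hΔt hΓt' =>
    obtain ⟨S₀', hXj, hsubS⟩ := SubL.getElem?_eq hΓL hΓj
    refine ⟨T.replace (.node ΔT ((ΓT.set (i - 1)
        (α, .node Δt' (Γt' ++ [(β, S₀')]))).eraseIdx (j - 1))) k,
      ⟨k, _, pos', by rw [hT]; exact RootStep.jay hi hj hij hβ hXi hXj, rfl⟩,
      sub_replace k hTU (Sub.node hΔ (SubL.eraseIdx
        (SubL.set hΓL _ (Sub.node hΔt (SubL.append hΓt' (SubL.cons hsubS SubL.nil)))) _))⟩

end TRC



/-- an atomic step followed by a `μ`-step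
(`μ ∈ {π⁺, π⁻, 𝔣4, λ, J}`) can be replaced by a `μ`-step followed by
finitely many atomic steps. -/
theorem atomic_permutation (ρ μ : TRC.Rule)
    (hρ : ρ = TRC.Rule.rhoP ∨ ρ = TRC.Rule.rhoM)
    (hμ : μ = TRC.Rule.piP ∨ μ = TRC.Rule.piM ∨ μ = TRC.Rule.four ∨
      μ = TRC.Rule.lam ∨ μ = TRC.Rule.jay)
    (T S : TRC.MTree) (h : ∃ U, TRC.StepR ρ T U ∧ TRC.StepR μ U S) :
    ∃ U, TRC.StepR μ T U ∧ Relation.ReflTransGen TRC.AtomicStep U S := by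
  obtain ⟨U, hTU, hUS⟩ := h
  have hA : TRC.AtomicStep T U := by
    rcases hρ with rfl | rfl
    · exact Or.inl hTU
    · exact Or.inr hTU
  obtain ⟨U', h1, h2⟩ := TRC.sub_stepR_comm hμ (TRC.atomic_sub hA) hUS
  exact ⟨U', h1, TRC.sub_steps h2⟩
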